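/- arXiv:1110.3493 — 2 statements merged into one kernel-verified Lean document; each statement's English description precedes it below -/
import Mathlib

section
/- For every integer l ≥ 3, the weighted sum ∑_{ν=2}^{l-1} 2^ν ζ₂(l-ν, ν) equals (l+1) ζ(l). -/
open Finset

noncomputable def Hh (k : ℕ) : ℝ := ∑ i ∈ Finset.range k, 1 / ((i : ℝ) + 1)

lemma Hh_nonneg (k : ℕ) : 0 ≤ Hh k :=
  Finset.sum_nonneg fun i _ => by positivity

lemma Hh_succ (k : ℕ) : Hh (k + 1) = Hh k + 1 / ((k : ℝ) + 1) :=
  Finset.sum_range_succ _ k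

lemma Hh_add (K c : ℕ) : Hh (K + c) - Hh K = ∑ d ∈ Finset.range c, 1 / ((K : ℝ) + d + 1) := by
  have : Hh (K + c) = Hh K + ∑ d ∈ Finset.range c, 1 / ((K : ℝ) + d + 1) := by
    unfold Hh
    rw [Finset.sum_range_add]
    congr 1
    apply Finset.sum_congr rfl
    intro d _
    push_cast
    ring_nf
  linarith

lemma Hh_tail_le (K c : ℕ) : Hh (K + c) - Hh K ≤ c / ((K : ℝ) + 1) := by
  rw [Hh_add]
  calc ∑ d ∈ Finset.range c, 1 / ((K : ℝ) + d + 1)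
      ≤ ∑ d ∈ Finset.range c, 1 / ((K : ℝ) + 1) := by
        apply Finset.sum_le_sum
        intro d _
        apply one_div_le_one_div_of_le (by positivity)
        have : (0:ℝ) ≤ d := Nat.cast_nonneg d
        linarith
    _ = c / ((K : ℝ) + 1) := by
        rw [Finset.sum_const, Finset.card_range, nsmul_eq_mul, mul_one_div]

lemma Hh_tail_nonneg (K c : ℕ) : 0 ≤ Hh (K + c) - Hh K := by
  rw [Hh_add]
  exact Finset.sum_nonneg fun i _ => by positivity

/-- key telescoping sum : ∑_{d≥0} 1/((d+1)(d+1+c)) = H_c / c -/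
lemma hasSum_core (c : ℕ) (hc : 1 ≤ c) :
    HasSum (fun d : ℕ => 1 / (((d : ℝ) + 1) * ((d : ℝ) + 1 + c))) (Hh c / c) := by
  have hc0 : (0:ℝ) < c := by exact_mod_cast hc
  rw [hasSum_iff_tendsto_nat_of_nonneg (fun d => by positivity)]
  have key : ∀ K : ℕ, ∑ d ∈ Finset.range K, 1 / (((d : ℝ) + 1) * ((d : ℝ) + 1 + c))
      = (Hh c - (Hh (K + c) - Hh K)) / c := by
    intro K
    have : ∀ d : ℕ, 1 / (((d : ℝ) + 1) * ((d : ℝ) + 1 + c))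
        = (1 / ((d : ℝ) + 1) - 1 / ((d : ℝ) + 1 + c)) / c := by
      intro d
      have h1 : ((d : ℝ) + 1) ≠ 0 := by positivity
      have h2 : ((d : ℝ) + 1 + c) ≠ 0 := by positivity
      field_simp
      ring
    simp_rw [this]
    rw [← Finset.sum_div, Finset.sum_sub_distrib]
    have e1 : ∑ d ∈ Finset.range K, 1 / ((d : ℝ) + 1) = Hh K := rfl
    have e2 : ∑ d ∈ Finset.range K, 1 / ((d : ℝ) + 1 + c) = Hh (c + K) - Hh c := by
      rw [Hh_add]
      apply Finset.sum_congr rfl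
      intro d _
      ring_nf
    rw [e1, e2, add_comm c K]
    ring
  simp_rw [key]
  have h0 : Filter.Tendsto (fun K : ℕ => Hh (K + c) - Hh K) Filter.atTop (nhds 0) := by
    apply squeeze_zero (fun K => Hh_tail_nonneg K c) (fun K => Hh_tail_le K c)
    have := Filter.Tendsto.div_atTop (f := fun _ : ℕ => (c:ℝ)) (l := Filter.atTop)
      tendsto_const_nhds (Filter.tendsto_atTop_add_const_right _ 1 tendsto_natCast_atTop_atTop)
    exact this
  have : Filter.Tendsto (fun K : ℕ => (Hh c - (Hh (K + c) - Hh K)) / c) Filter.atTop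
      (nhds ((Hh c - 0) / c)) := (tendsto_const_nhds.sub h0).div_const c
  simpa using this

lemma hasSum_shift (a : ℝ) (ha : 0 < a) :
    HasSum (fun n : ℕ => 1 / (((n : ℝ) + a) * ((n : ℝ) + a + 1))) (1 / a) := by
  rw [hasSum_iff_tendsto_nat_of_nonneg (fun d => by positivity)]
  have key : ∀ K : ℕ, ∑ n ∈ Finset.range K, 1 / (((n : ℝ) + a) * ((n : ℝ) + a + 1))
      = 1 / a - 1 / (K + a) := by
    intro K
    induction K with
    | zero => simp
    | succ K ih =>
      rw [Finset.sum_range_succ, ih]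
      have h1 : (K : ℝ) + a ≠ 0 := by positivity
      have h2 : (K : ℝ) + a + 1 ≠ 0 := by positivity
      push_cast
      field_simp
      ring
  simp_rw [key]
  have h0 : Filter.Tendsto (fun K : ℕ => 1 / ((K : ℝ) + a)) Filter.atTop (nhds 0) := by
    apply Filter.Tendsto.div_atTop tendsto_const_nhds
    exact Filter.tendsto_atTop_add_const_right _ a tendsto_natCast_atTop_atTop
  simpa using tendsto_const_nhds.sub h0

lemma sqrt_two_lt : Real.sqrt 2 ≤ 1.5 := by
  nlinarith [Real.sq_sqrt (by norm_num : (0:ℝ) ≤ 2), Real.sqrt_nonneg 2]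

lemma Hh_le_sqrt (k : ℕ) : Hh k ≤ 2 * Real.sqrt k := by
  induction k with
  | zero => simp [Hh]
  | succ k ih =>
    rw [Hh_succ]
    have hst : Real.sqrt k ≤ Real.sqrt (k + 1) := by
      apply Real.sqrt_le_sqrt; push_cast; linarith
    have ht1 : (1:ℝ) ≤ Real.sqrt ((k:ℝ) + 1) := by
      have := Real.sqrt_le_sqrt (show (1:ℝ) ≤ (k:ℝ) + 1 by
        have : (0:ℝ) ≤ (k:ℝ) := Nat.cast_nonneg k
        linarith)
      rwa [Real.sqrt_one] at this
    have ht2 : (Real.sqrt ((k:ℝ) + 1))^2 = (k:ℝ) + 1 :=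
      Real.sq_sqrt (by positivity)
    have hs2 : (Real.sqrt (k:ℝ))^2 = (k:ℝ) := Real.sq_sqrt (by positivity)
    have hcast : (((k + 1 : ℕ)):ℝ) = (k:ℝ) + 1 := by push_cast; ring
    rw [hcast] at *
    set s := Real.sqrt (k:ℝ)
    set t := Real.sqrt ((k:ℝ) + 1)
    have hkey : (t - s) * (t + s) = 1 := by nlinarith
    have h3 : 0 ≤ (t - s) * (2 * t^2 - t - s) := by
      apply mul_nonneg (by linarith)
      nlinarith
    have hgoal : 1 / ((k:ℝ) + 1) ≤ 2 * t - 2 * s := by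
      rw [div_le_iff₀ (by positivity)]
      nlinarith
    linarith

noncomputable def cpos (m n : ℕ) : ℝ :=
  if m < n then 1 / (((m:ℝ) + n + 2) * ((n:ℝ) - m)) else 0
noncomputable def cneg (m n : ℕ) : ℝ :=
  if n < m then 1 / (((m:ℝ) + n + 2) * ((m:ℝ) - n)) else 0
noncomputable def cfun (m n : ℕ) : ℝ :=
  if n = m then 0 else 1 / (((m:ℝ) + n + 2) * ((n:ℝ) - m))

lemma cpos_nonneg (m n : ℕ) : 0 ≤ cpos m n := by
  unfold cpos
  split
  · rename_i h
    have : (m:ℝ) < n := by exact_mod_cast h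
    have h2 : (0:ℝ) < (m:ℝ) + n + 2 := by positivity
    exact le_of_lt (one_div_pos.mpr (mul_pos h2 (by linarith)))
  · exact le_refl _

lemma cneg_nonneg (m n : ℕ) : 0 ≤ cneg m n := by
  unfold cneg
  split
  · rename_i h
    have : (n:ℝ) < m := by exact_mod_cast h
    have h2 : (0:ℝ) < (m:ℝ) + n + 2 := by positivity
    exact le_of_lt (one_div_pos.mpr (mul_pos h2 (by linarith)))
  · exact le_refl _

lemma cfun_eq (m n : ℕ) : cfun m n = cpos m n - cneg m n := by
  unfold cfun cpos cneg
  rcases lt_trichotomy n m with h | h | h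
  · rw [if_neg (by omega), if_neg (by omega), if_pos h]
    have : ((n:ℝ) - m) = -((m:ℝ) - n) := by ring
    rw [this, mul_neg, div_neg]
    ring
  · rw [if_pos h, if_neg (by omega), if_neg (by omega)]; ring
  · rw [if_neg (by omega), if_pos h, if_neg (by omega)]; ring

lemma cabs_eq (m n : ℕ) : |cfun m n| = cpos m n + cneg m n := by
  unfold cfun cpos cneg
  rcases lt_trichotomy n m with h | h | h
  · rw [if_neg (by omega), if_neg (by omega), if_pos h]
    have hn : (n:ℝ) < m := by exact_mod_cast h
    have h2 : (0:ℝ) < (m:ℝ) + n + 2 := by positivity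
    rw [abs_of_nonpos]
    · rw [show ((n:ℝ) - m) = -((m:ℝ) - n) by ring, mul_neg, div_neg]; ring
    · rw [show ((n:ℝ) - m) = -((m:ℝ) - n) by ring, mul_neg, div_neg]
      simp only [neg_nonpos]
      exact (one_div_pos.mpr (mul_pos h2 (by linarith))).le
  · simp [if_pos h, if_neg (by omega : ¬ m < n), if_neg (by omega : ¬ n < m), h]
  · rw [if_neg (by omega), if_pos h, if_neg (by omega)]
    have hn : (m:ℝ) < n := by exact_mod_cast h
    have h2 : (0:ℝ) < (m:ℝ) + n + 2 := by positivity
    rw [abs_of_nonneg (one_div_pos.mpr (mul_pos h2 (by linarith))).le]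
    ring

lemma hasSum_cpos (m : ℕ) : HasSum (cpos m) (Hh (2*m+2) / ((2*m+2 : ℕ) : ℝ)) := by
  have hinj : Function.Injective (fun d : ℕ => m + 1 + d) := fun a b h => by
    simpa using h
  have hout : ∀ x ∉ Set.range (fun d : ℕ => m + 1 + d), cpos m x = 0 := by
    intro x hx
    have : ¬ m < x := by
      intro h
      exact hx ⟨x - m - 1, show m + 1 + (x - m - 1) = x by omega⟩
    simp [cpos, this]
  rw [← Function.Injective.hasSum_iff hinj hout]
  have core := hasSum_core (2*m+2) (by omega)
  apply core.congr_fun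
  intro d
  have h1 : m < m + 1 + d := by omega
  simp only [Function.comp_apply, cpos, if_pos h1]
  push_cast
  ring_nf

lemma finN (m : ℕ) : ∑ n ∈ Finset.range m, cneg m n
    = (Hh (2*m+1) - 1/((m:ℝ)+1)) / (2*(m:ℝ)+2) := by
  have step : ∀ n ∈ Finset.range m, cneg m n
      = (1/((m:ℝ) - n) + 1/((m:ℝ) + n + 2)) / (2*(m:ℝ)+2) := by
    intro n hn
    rw [Finset.mem_range] at hn
    have h1 : (n:ℝ) < m := by exact_mod_cast hn
    have h2 : (0:ℝ) < (m:ℝ) - n := by linarith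
    have h3 : (0:ℝ) < (m:ℝ) + n + 2 := by positivity
    rw [cneg, if_pos hn]
    field_simp
    ring
  rw [Finset.sum_congr rfl step, ← Finset.sum_div, Finset.sum_add_distrib]
  have S1 : ∑ n ∈ Finset.range m, 1/((m:ℝ) - n) = Hh m := by
    rw [← Finset.sum_range_reflect (fun j => 1/((m:ℝ) - j)) m]
    apply Finset.sum_congr rfl
    intro j hj
    rw [Finset.mem_range] at hj
    have e : ((m - 1 - j : ℕ) : ℝ) = (m:ℝ) - ((j:ℝ)+1) := by
      rw [show m - 1 - j = m - (j+1) by omega, Nat.cast_sub (by omega)]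
      push_cast
      ring
    rw [e]
    congr 1
    ring
  have S2 : ∑ n ∈ Finset.range m, 1/((m:ℝ) + n + 2) = Hh (2*m+1) - Hh (m+1) := by
    have := Hh_add (m+1) m
    rw [show m + 1 + m = 2*m+1 by omega] at this
    rw [this]
    apply Finset.sum_congr rfl
    intro n _
    push_cast
    ring_nf
  rw [S1, S2, Hh_succ m]
  push_cast
  ring

lemma hasSum_cneg (m : ℕ) :
    HasSum (cneg m) ((Hh (2*m+1) - 1/((m:ℝ)+1)) / (2*(m:ℝ)+2)) := by
  rw [← finN m]
  apply hasSum_sum_of_ne_finset_zero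
  intro n hn
  rw [Finset.mem_range, not_lt] at hn
  simp [cneg, Nat.not_lt.mpr hn]

lemma hasSum_cfun (m : ℕ) : HasSum (cfun m) (3 / (4 * ((m:ℝ)+1)^2)) := by
  have h := (hasSum_cpos m).sub (hasSum_cneg m)
  have heq : Hh (2*m+2) / ((2*m+2 : ℕ) : ℝ) - (Hh (2*m+1) - 1/((m:ℝ)+1)) / (2*(m:ℝ)+2)
      = 3 / (4 * ((m:ℝ)+1)^2) := by
    have h22 : Hh (2*m+2) = Hh (2*m+1) + 1/(((2*m+1 : ℕ):ℝ) + 1) := Hh_succ (2*m+1)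
    rw [h22]
    have hm : (0:ℝ) < (m:ℝ) + 1 := by positivity
    push_cast
    field_simp
    ring
  rw [heq] at h
  exact h.congr_fun fun n => cfun_eq m n

lemma hasSum_cabs (m : ℕ) :
    HasSum (fun n => |cfun m n|)
      (Hh (2*m+2) / ((2*m+2 : ℕ) : ℝ) + (Hh (2*m+1) - 1/((m:ℝ)+1)) / (2*(m:ℝ)+2)) := by
  exact ((hasSum_cpos m).add (hasSum_cneg m)).congr_fun fun n => cabs_eq m n

lemma cabs_val_le (m : ℕ) :
    Hh (2*m+2) / ((2*m+2 : ℕ) : ℝ) + (Hh (2*m+1) - 1/((m:ℝ)+1)) / (2*(m:ℝ)+2)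
      ≤ 3 / Real.sqrt ((m:ℝ)+1) := by
  have hm : (0:ℝ) < (m:ℝ) + 1 := by positivity
  have h1 : Hh (2*m+1) ≤ Hh (2*m+2) := by
    have h22 := Hh_succ (2*m+1)
    have : (0:ℝ) ≤ 1/(((2*m+1:ℕ):ℝ)+1) := by positivity
    rw [show 2*m+1+1 = 2*m+2 from rfl] at h22
    linarith
  have h2 : Hh (2*m+2) ≤ 2 * Real.sqrt ((2*m+2 : ℕ) : ℝ) := Hh_le_sqrt (2*m+2)
  have h3 : Real.sqrt ((2*m+2 : ℕ) : ℝ) = Real.sqrt 2 * Real.sqrt ((m:ℝ)+1) := by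
    rw [← Real.sqrt_mul (by norm_num : (0:ℝ) ≤ 2)]
    congr 1
    push_cast
    ring
  have hs2 : Real.sqrt 2 ≤ 1.5 := sqrt_two_lt
  have hsp : (0:ℝ) < Real.sqrt ((m:ℝ)+1) := Real.sqrt_pos.mpr hm
  have hsq : (Real.sqrt ((m:ℝ)+1))^2 = (m:ℝ)+1 := Real.sq_sqrt hm.le
  have hH : Hh (2*m+2) ≤ 3 * Real.sqrt ((m:ℝ)+1) := by
    rw [h3] at h2
    nlinarith [Real.sqrt_nonneg ((m:ℝ)+1)]
  have hpos1 : (0:ℝ) ≤ 1/((m:ℝ)+1) := by positivity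
  have hcast : ((2*m+2 : ℕ) : ℝ) = 2*(m:ℝ)+2 := by push_cast; ring
  rw [hcast]
  calc Hh (2*m+2) / (2*(m:ℝ)+2) + (Hh (2*m+1) - 1/((m:ℝ)+1)) / (2*(m:ℝ)+2)
      ≤ Hh (2*m+2) / (2*(m:ℝ)+2) + Hh (2*m+2) / (2*(m:ℝ)+2) := by
        apply add_le_add le_rfl
        apply div_le_div_of_nonneg_right ?_ (by linarith)
        · linarith
    _ = Hh (2*m+2) / ((m:ℝ)+1) := by field_simp; ring
    _ ≤ (3 * Real.sqrt ((m:ℝ)+1)) / ((m:ℝ)+1) := by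
        apply div_le_div_of_nonneg_right hH hm.le
    _ = 3 / Real.sqrt ((m:ℝ)+1) := by
        rw [eq_div_iff (ne_of_gt hsp)]
        field_simp
        nlinarith

lemma summable_pow_shift (k : ℕ) (hk : 2 ≤ k) :
    Summable (fun m : ℕ => 1/(((m:ℝ)+1))^k) := by
  have h := (summable_nat_add_iff 1).mpr (Real.summable_one_div_nat_pow.mpr (by omega : 1 < k))
  apply h.congr
  intro m
  push_cast
  ring

lemma summable_rpow_shift : Summable (fun m : ℕ => 1/(((m:ℝ)+1))^((3:ℝ)/2)) := by
  have h := (summable_nat_add_iff 1).mpr (Real.summable_one_div_nat_rpow.mpr (by norm_num : 1 < (3:ℝ)/2))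
  apply h.congr
  intro m
  push_cast
  ring_nf

lemma summable_bnd (m : ℕ) :
    Summable (fun n : ℕ => 1/(((m:ℝ)+n+1) * ((m:ℝ)+n+2))) ∧
    HasSum (fun n : ℕ => 1/(((m:ℝ)+n+1) * ((m:ℝ)+n+2))) (1/((m:ℝ)+1)) := by
  have h := hasSum_shift ((m:ℝ)+1) (by positivity)
  have h2 : HasSum (fun n : ℕ => 1/(((m:ℝ)+n+1) * ((m:ℝ)+n+2))) (1/((m:ℝ)+1)) := by
    apply h.congr_fun
    intro n
    ring_nf
  exact ⟨h2.summable, h2⟩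

lemma fnu_le (k1 k2 : ℕ) (h1 : 1 ≤ k1) (h2 : 2 ≤ k2) (m n : ℕ) :
    1/((((m:ℝ)+1)^k1 * ((m:ℝ)+n+2)^k2))
      ≤ (1/((m:ℝ)+1)^k1) * (1/(((m:ℝ)+n+1) * ((m:ℝ)+n+2))) := by
  have ha : (0:ℝ) < (m:ℝ)+1 := by positivity
  have hb : (0:ℝ) < (m:ℝ)+n+1 := by positivity
  have hc : (0:ℝ) < (m:ℝ)+n+2 := by positivity
  rw [one_div_mul_one_div]
  apply one_div_le_one_div_of_le (by positivity)
  apply mul_le_mul_of_nonneg_left ?_ (by positivity)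
  calc ((m:ℝ)+n+1) * ((m:ℝ)+n+2) ≤ ((m:ℝ)+n+2)^2 := by nlinarith
    _ ≤ ((m:ℝ)+n+2)^k2 := pow_le_pow_right₀ (by linarith) h2

lemma summable_fnu (k1 k2 : ℕ) (h1 : 1 ≤ k1) (h2 : 2 ≤ k2) :
    Summable (fun p : ℕ × ℕ => 1/((((p.1:ℝ)+1)^k1 * ((p.1:ℝ)+p.2+2)^k2))) := by
  rw [summable_prod_of_nonneg (fun p => by positivity)]
  constructor
  · intro m
    apply Summable.of_nonneg_of_le (fun n => by positivity) (fun n => fnu_le k1 k2 h1 h2 m n)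
    exact ((summable_bnd m).1.mul_left _)
  · have hmaj : Summable (fun m : ℕ => 1/(((m:ℝ)+1))^(k1+1)) :=
      summable_pow_shift (k1+1) (by omega)
    apply Summable.of_nonneg_of_le (fun m => tsum_nonneg (fun n => by positivity)) ?_ hmaj
    intro m
    have hle : (∑' n : ℕ, 1/((((m:ℝ)+1)^k1 * ((m:ℝ)+n+2)^k2)))
        ≤ ∑' n : ℕ, (1/((m:ℝ)+1)^k1) * (1/(((m:ℝ)+n+1) * ((m:ℝ)+n+2))) := by
      apply Summable.tsum_le_tsum (fun n => fnu_le k1 k2 h1 h2 m n)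
      · apply Summable.of_nonneg_of_le (fun n => by positivity) (fun n => fnu_le k1 k2 h1 h2 m n)
        exact ((summable_bnd m).1.mul_left _)
      · exact ((summable_bnd m).1.mul_left _)
    have heq : (∑' n : ℕ, (1/((m:ℝ)+1)^k1) * (1/(((m:ℝ)+n+1) * ((m:ℝ)+n+2))))
        = (1/((m:ℝ)+1)^k1) * (1/((m:ℝ)+1)) :=
      ((summable_bnd m).2.mul_left (1/((m:ℝ)+1)^k1)).tsum_eq
    rw [heq] at hle
    have hfin : (1/((m:ℝ)+1)^k1) * (1/((m:ℝ)+1)) = 1/(((m:ℝ)+1))^(k1+1) := by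
      rw [pow_succ, one_div_mul_one_div]
    exact le_trans hle (le_of_eq hfin)

set_option maxHeartbeats 1000000 in
lemma summable_T1abs (e : ℕ) (he : 1 ≤ e) :
    Summable (fun p : ℕ × ℕ => |(4/((p.1:ℝ)+1)^e) * cfun p.1 p.2|) := by
  have habs : ∀ p : ℕ × ℕ, |(4/((p.1:ℝ)+1)^e) * cfun p.1 p.2|
      = (4/((p.1:ℝ)+1)^e) * |cfun p.1 p.2| := by
    intro p
    rw [abs_mul, abs_of_nonneg (by positivity)]
  simp_rw [habs]
  rw [summable_prod_of_nonneg (fun p => by positivity)]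
  constructor
  · intro m
    exact ((hasSum_cabs m).summable).mul_left (4/((m:ℝ)+1)^e)
  · have hmaj : Summable (fun m : ℕ => 12 * (1/(((m:ℝ)+1))^((3:ℝ)/2))) :=
      summable_rpow_shift.mul_left 12
    apply Summable.of_nonneg_of_le (fun m => tsum_nonneg (fun n => by positivity)) ?_ hmaj
    intro m
    have heq : (∑' n : ℕ, (4/((m:ℝ)+1)^e) * |cfun m n|)
        = (4/((m:ℝ)+1)^e) * (Hh (2*m+2) / ((2*m+2 : ℕ) : ℝ)
            + (Hh (2*m+1) - 1/((m:ℝ)+1)) / (2*(m:ℝ)+2)) :=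
      ((hasSum_cabs m).mul_left (4/((m:ℝ)+1)^e)).tsum_eq
    rw [heq]
    have hm : (0:ℝ) < (m:ℝ)+1 := by positivity
    have hs : (0:ℝ) < Real.sqrt ((m:ℝ)+1) := Real.sqrt_pos.mpr hm
    have hV := cabs_val_le m
    have hVpos : 0 ≤ Hh (2*m+2) / ((2*m+2 : ℕ) : ℝ)
        + (Hh (2*m+1) - 1/((m:ℝ)+1)) / (2*(m:ℝ)+2) :=
      ((hasSum_cabs m).nonneg (fun n => abs_nonneg _))
    have hc : 4/((m:ℝ)+1)^e ≤ 4/((m:ℝ)+1) := by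
      apply div_le_div_of_nonneg_left (by norm_num) hm
      calc (m:ℝ)+1 = ((m:ℝ)+1)^1 := (pow_one _).symm
        _ ≤ ((m:ℝ)+1)^e := pow_le_pow_right₀ (by linarith) he
    have hrw : ((m:ℝ)+1)^((3:ℝ)/2) = ((m:ℝ)+1) * Real.sqrt ((m:ℝ)+1) := by
      rw [Real.sqrt_eq_rpow]
      have h32 : ((3:ℝ)/2) = 1 + 1/2 := by norm_num
      rw [h32, Real.rpow_add hm, Real.rpow_one]
    calc (4/((m:ℝ)+1)^e) * (Hh (2*m+2) / ((2*m+2 : ℕ) : ℝ)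
            + (Hh (2*m+1) - 1/((m:ℝ)+1)) / (2*(m:ℝ)+2))
        ≤ (4/((m:ℝ)+1)) * (3 / Real.sqrt ((m:ℝ)+1)) := by
          apply mul_le_mul hc hV hVpos (by positivity)
      _ = 12 * (1/(((m:ℝ)+1))^((3:ℝ)/2)) := by
          rw [hrw]
          field_simp
          ring

noncomputable def T1f (e : ℕ) (p : ℕ × ℕ) : ℝ := (4/((p.1:ℝ)+1)^e) * cfun p.1 p.2

noncomputable def Dfun (L : ℕ) (p : ℕ × ℕ) : ℝ :=
  if p.2 = p.1 then ((L:ℝ)+1)/((p.1:ℝ)+1)^(L+3) else 0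

noncomputable def T2f (L : ℕ) (p : ℕ × ℕ) : ℝ :=
  if p.2 = p.1 then 0 else 2^(L+3)/((((p.1:ℝ)+p.2+2))^(L+2) * ((p.2:ℝ)-p.1))

set_option maxHeartbeats 2000000 in
lemma pointwise (L : ℕ) (m n : ℕ) :
    ∑ ν ∈ Finset.Icc 2 (L+2), (2:ℝ)^ν * (1/(((m:ℝ)+1)^(L+3-ν) * ((m:ℝ)+n+2)^ν))
      = Dfun L (m,n) + T1f (L+1) (m,n) - T2f L (m,n) := by
  have ha : (0:ℝ) < (m:ℝ)+1 := by positivity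
  have hb : (0:ℝ) < (m:ℝ)+n+2 := by positivity
  by_cases hnm : n = m
  · subst hnm
    have hterm : ∀ ν ∈ Finset.Icc 2 (L+2),
        (2:ℝ)^ν * (1/(((n:ℝ)+1)^(L+3-ν) * ((n:ℝ)+n+2)^ν)) = 1/((n:ℝ)+1)^(L+3) := by
      intro ν hν
      rw [Finset.mem_Icc] at hν
      have hpow : ((n:ℝ)+1)^(L+3-ν) * ((n:ℝ)+1)^ν = ((n:ℝ)+1)^(L+3) :=
        pow_sub_mul_pow _ (by omega)
      rw [show ((n:ℝ)+n+2) = 2*((n:ℝ)+1) by ring, mul_pow, ← hpow]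
      have h1 : ((n:ℝ)+1)^(L+3-ν) ≠ 0 := by positivity
      have h2 : ((n:ℝ)+1)^ν ≠ 0 := by positivity
      field_simp
    rw [Finset.sum_congr rfl hterm, Finset.sum_const, Nat.card_Icc, nsmul_eq_mul]
    simp only [Dfun, T1f, T2f, cfun, if_pos rfl]
    push_cast
    ring
  · have hd : ((n:ℝ) - m) ≠ 0 := by
      intro h
      exact hnm (by exact_mod_cast sub_eq_zero.mp h)
    have hr : (2*((m:ℝ)+1)/((m:ℝ)+n+2)) ≠ 1 := by
      intro h
      rw [div_eq_one_iff_eq hb.ne'] at h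
      apply hd
      have : (n:ℝ) - m = ((m:ℝ)+n+2) - 2*((m:ℝ)+1) := by ring
      rw [this, ← h]
      ring
    have hterm : ∀ ν ∈ Finset.Icc 2 (L+2),
        (2:ℝ)^ν * (1/(((m:ℝ)+1)^(L+3-ν) * ((m:ℝ)+n+2)^ν))
          = (2*((m:ℝ)+1)/((m:ℝ)+n+2))^ν / ((m:ℝ)+1)^(L+3) := by
      intro ν hν
      rw [Finset.mem_Icc] at hν
      have hpow : ((m:ℝ)+1)^(L+3-ν) * ((m:ℝ)+1)^ν = ((m:ℝ)+1)^(L+3) :=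
        pow_sub_mul_pow _ (by omega)
      rw [div_pow, mul_pow, ← hpow]
      have h1 : ((m:ℝ)+1)^(L+3-ν) ≠ 0 := by positivity
      have h2 : ((m:ℝ)+1)^ν ≠ 0 := by positivity
      have h3 : ((m:ℝ)+n+2)^ν ≠ 0 := by positivity
      field_simp
    rw [Finset.sum_congr rfl hterm, ← Finset.sum_div]
    rw [show Finset.Icc 2 (L+2) = Finset.Ico 2 (L+3) from (Finset.Ico_add_one_right_eq_Icc 2 (L+2)).symm]
    rw [geom_sum_Ico hr (by omega)]
    simp only [Dfun, T1f, T2f, cfun, if_neg hnm]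
    have hr1 : 2*((m:ℝ)+1)/((m:ℝ)+n+2) - 1 ≠ 0 := sub_ne_zero.mpr hr
    have hsub : 2*((m:ℝ)+1)/((m:ℝ)+n+2) - 1 = (2*((m:ℝ)+1) - ((m:ℝ)+n+2))/((m:ℝ)+n+2) := by
      rw [div_sub_one hb.ne']
    have hd2 : 2*((m:ℝ)+1) - ((m:ℝ)+n+2) ≠ 0 := by
      intro h
      apply hd
      have : (n:ℝ) - m = -(2*((m:ℝ)+1) - ((m:ℝ)+n+2)) := by ring
      rw [this, h]
      ring
    rw [hsub, div_pow, div_pow, mul_pow, mul_pow, zero_add]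
    rw [div_div_eq_mul_div]
    field_simp [hd, hd2]
    rw [div_eq_iff (by rw [mul_comm]; exact hd2)]
    ring

lemma hasSum_D (L : ℕ) :
    HasSum (Dfun L) (((L:ℝ)+1) * ∑' k : ℕ, 1/((k:ℝ)+1)^(L+3)) := by
  have hinj : Function.Injective (fun k : ℕ => ((k, k) : ℕ × ℕ)) := by
    intro a b h
    exact (Prod.ext_iff.mp h).1
  have hout : ∀ p ∉ Set.range (fun k : ℕ => ((k, k) : ℕ × ℕ)), Dfun L p = 0 := by
    intro p hp
    rw [Dfun, if_neg]
    intro h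
    exact hp ⟨p.1, Prod.ext_iff.mpr ⟨rfl, h.symm⟩⟩
  rw [← Function.Injective.hasSum_iff hinj hout]
  apply (((summable_pow_shift (L+3) (by omega)).hasSum.mul_left ((L:ℝ)+1))).congr_fun
  intro k
  simp [Dfun, mul_one_div, div_eq_mul_inv]

lemma tsum_T1 (L : ℕ) :
    ∑' p : ℕ × ℕ, T1f (L+1) p = 3 * ∑' k : ℕ, 1/((k:ℝ)+1)^(L+3) := by
  have hT1 : Summable (T1f (L+1)) := (summable_T1abs (L+1) (by omega)).of_abs
  rw [Summable.tsum_prod hT1]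
  have hinner : ∀ m : ℕ, (∑' n : ℕ, T1f (L+1) (m, n))
      = 3 * (1/((m:ℝ)+1)^(L+3)) := by
    intro m
    have h1 : (∑' n : ℕ, (4/((m:ℝ)+1)^(L+1)) * cfun m n)
        = (4/((m:ℝ)+1)^(L+1)) * (3 / (4 * ((m:ℝ)+1)^2)) :=
      ((hasSum_cfun m).mul_left _).tsum_eq
    have h2 : (∑' n : ℕ, T1f (L+1) (m, n)) = ∑' n : ℕ, (4/((m:ℝ)+1)^(L+1)) * cfun m n :=
      tsum_congr fun n => rfl
    rw [h2, h1]
    have hp : ((m:ℝ)+1)^(L+1) * ((m:ℝ)+1)^2 = ((m:ℝ)+1)^(L+3) := by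
      rw [← pow_add]
    have ha : (0:ℝ) < (m:ℝ)+1 := by positivity
    have h3 : ((m:ℝ)+1)^(L+1) ≠ 0 := by positivity
    have h4 : ((m:ℝ)+1)^(L+3) ≠ 0 := by positivity
    have h5 : ((m:ℝ)+1)^2 ≠ 0 := by positivity
    rw [← hp]
    field_simp
  rw [tsum_congr hinner, tsum_mul_left]

lemma T2_anti (L : ℕ) (p : ℕ × ℕ) : T2f L (p.2, p.1) = - T2f L p := by
  obtain ⟨m, n⟩ := p
  simp only [T2f]
  by_cases h : n = m
  · subst h
    simp
  · rw [if_neg h, if_neg (fun hh => h hh.symm)]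
    rw [show ((n:ℝ)+m+2) = ((m:ℝ)+n+2) by ring,
      show (m:ℝ)-n = -((n:ℝ)-m) by ring, mul_neg, div_neg]

lemma summable_S (L : ℕ) :
    Summable (fun p : ℕ × ℕ => ∑ ν ∈ Finset.Icc 2 (L+2),
      (2:ℝ)^ν * (1/(((p.1:ℝ)+1)^(L+3-ν) * ((p.1:ℝ)+p.2+2)^ν))) := by
  apply summable_sum
  intro ν hν
  rw [Finset.mem_Icc] at hν
  exact (summable_fnu (L+3-ν) ν (by omega) (by omega)).mul_left _

lemma summable_T2 (L : ℕ) : Summable (T2f L) := by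
  have hD := (hasSum_D L).summable
  have hT1 : Summable (T1f (L+1)) := (summable_T1abs (L+1) (by omega)).of_abs
  apply Summable.congr (((hD.add hT1).sub (summable_S L)))
  intro p
  obtain ⟨m, n⟩ := p
  have := pointwise L m n
  simp only [Pi.add_apply, Pi.sub_apply] at *
  linarith

lemma tsum_T2 (L : ℕ) : ∑' p : ℕ × ℕ, T2f L p = 0 := by
  have hswap := (Equiv.prodComm ℕ ℕ).tsum_eq (T2f L)
  have heq : ∀ p : ℕ × ℕ, T2f L ((Equiv.prodComm ℕ ℕ) p) = - T2f L p := by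
    intro p
    rw [Equiv.prodComm_apply]
    exact T2_anti L p
  rw [tsum_congr heq, tsum_neg] at hswap
  linarith

lemma real_main (L : ℕ) :
    ∑ ν ∈ Finset.Icc 2 (L+2), (2:ℝ)^ν *
        (∑' p : ℕ × ℕ, 1/(((p.1:ℝ)+1)^(L+3-ν) * ((p.1:ℝ)+p.2+2)^ν))
      = ((L:ℝ)+4) * ∑' k : ℕ, 1/((k:ℝ)+1)^(L+3) := by
  have hD := hasSum_D L
  have hT1 : Summable (T1f (L+1)) := (summable_T1abs (L+1) (by omega)).of_abs
  have hT2 := summable_T2 L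
  have step1 : ∑ ν ∈ Finset.Icc 2 (L+2), (2:ℝ)^ν *
        (∑' p : ℕ × ℕ, 1/(((p.1:ℝ)+1)^(L+3-ν) * ((p.1:ℝ)+p.2+2)^ν))
      = ∑ ν ∈ Finset.Icc 2 (L+2),
        (∑' p : ℕ × ℕ, (2:ℝ)^ν * (1/(((p.1:ℝ)+1)^(L+3-ν) * ((p.1:ℝ)+p.2+2)^ν))) := by
    apply Finset.sum_congr rfl
    intro ν _
    rw [tsum_mul_left]
  have step2 : ∑ ν ∈ Finset.Icc 2 (L+2),
        (∑' p : ℕ × ℕ, (2:ℝ)^ν * (1/(((p.1:ℝ)+1)^(L+3-ν) * ((p.1:ℝ)+p.2+2)^ν)))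
      = ∑' p : ℕ × ℕ, ∑ ν ∈ Finset.Icc 2 (L+2),
          (2:ℝ)^ν * (1/(((p.1:ℝ)+1)^(L+3-ν) * ((p.1:ℝ)+p.2+2)^ν)) := by
    rw [Summable.tsum_finsetSum]
    intro ν hν
    rw [Finset.mem_Icc] at hν
    exact (summable_fnu (L+3-ν) ν (by omega) (by omega)).mul_left _
  have step3 : ∑' p : ℕ × ℕ, ∑ ν ∈ Finset.Icc 2 (L+2),
          (2:ℝ)^ν * (1/(((p.1:ℝ)+1)^(L+3-ν) * ((p.1:ℝ)+p.2+2)^ν))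
      = ∑' p : ℕ × ℕ, (Dfun L p + T1f (L+1) p - T2f L p) :=
    tsum_congr fun p => pointwise L p.1 p.2
  rw [step1, step2, step3]
  rw [Summable.tsum_sub (hD.summable.add hT1) hT2, Summable.tsum_add hD.summable hT1]
  rw [hD.tsum_eq, tsum_T1 L, tsum_T2 L]
  ring

open scoped BigOperators

/-- Double zeta value `ζ₂(k₁,k₂) = ∑_{1 ≤ m < m+n} 1/(m^{k₁} (m+n)^{k₂})`. -/
noncomputable def zeta2 (k1 k2 : ℕ) : ℂ :=
  ∑' p : ℕ × ℕ, 1 / (((p.1 : ℂ) + 1) ^ k1 * ((p.1 : ℂ) + 1 + ((p.2 : ℂ) + 1)) ^ k2)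

lemma zeta2_eq_real (k1 k2 : ℕ) :
    zeta2 k1 k2 = ((∑' p : ℕ × ℕ, 1/(((p.1:ℝ)+1)^k1 * ((p.1:ℝ)+p.2+2)^k2) : ℝ) : ℂ) := by
  rw [zeta2, Complex.ofReal_tsum]
  apply tsum_congr
  intro p
  push_cast
  ring_nf

lemma zeta_eq_real (L : ℕ) :
    riemannZeta ((L+3 : ℕ) : ℂ) = ((∑' k : ℕ, 1/((k:ℝ)+1)^(L+3) : ℝ) : ℂ) := by
  rw [zeta_eq_tsum_one_div_nat_add_one_cpow
    (by rw [Complex.natCast_re]; exact_mod_cast (by omega : 1 < L+3))]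
  rw [Complex.ofReal_tsum]
  apply tsum_congr
  intro n
  rw [Complex.cpow_natCast]
  push_cast
  ring_nf

theorem Ohno_Zudilin_weighted_sum_formula (l : ℕ) (hl : 3 ≤ l) :
    ∑ ν ∈ Finset.Icc 2 (l - 1), (2 : ℂ) ^ ν * zeta2 (l - ν) ν
      = ((l : ℂ) + 1) * riemannZeta l := by
  obtain ⟨L, rfl⟩ : ∃ L, l = L + 3 := ⟨l - 3, by omega⟩
  have h1 : L + 3 - 1 = L + 2 := by omega
  rw [h1]
  have hterm : ∀ ν ∈ Finset.Icc 2 (L+2), (2:ℂ)^ν * zeta2 (L+3-ν) ν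
      = ((((2:ℝ)^ν * (∑' p : ℕ × ℕ,
          1/(((p.1:ℝ)+1)^(L+3-ν) * ((p.1:ℝ)+p.2+2)^ν))) : ℝ) : ℂ) := by
    intro ν hν
    rw [zeta2_eq_real]
    push_cast
    ring
  rw [Finset.sum_congr rfl hterm, zeta_eq_real L, ← Complex.ofReal_sum, real_main L]
  push_cast
  ring
end

section
/- For every positive integer k and every complex number x with |x| ≤ 1, the identity ∑_{m,n≥1} x^n/(m(m+n)^{k+1}) − ∑_{m,n≥1} x^{m+n}/(m(m+n)^{k+1}) + ∑_{ν=2}^{k+1} ∑_{m,n≥1} x^n/(n^{k+2−ν}(m+n)^ν) = Li(k+2; x) holds, where Li(s;x) = ∑_{n≥1} x^n/n^s. -/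
open scoped BigOperators

open Filter Topology

/-! ### Auxiliary summability lemmas -/

lemma aux_sq_summable : Summable (fun n : ℕ => 1/((n:ℝ)+1)^2) := by
  have := (summable_nat_add_iff 1).2 (Real.summable_one_div_nat_pow.2 one_lt_two)
  apply this.congr
  intro n; push_cast; ring

lemma aux_g_summable : Summable (fun n : ℕ => 1/Real.sqrt (((n:ℝ)+1)^3)) := by
  have h32 : Summable (fun n : ℕ => 1/((n:ℝ)) ^ ((3:ℝ)/2)) :=
    Real.summable_one_div_nat_rpow.2 (by norm_num)
  have := (summable_nat_add_iff 1).2 h32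
  apply this.congr
  intro n
  rw [Real.sqrt_eq_rpow]
  push_cast
  rw [← Real.rpow_natCast ((n:ℝ)+1) 3, ← Real.rpow_mul (by positivity)]
  norm_num

lemma aux_dom : Summable (fun p : ℕ×ℕ =>
    (1/Real.sqrt (((p.1:ℝ)+1)^3)) * (1/Real.sqrt (((p.2:ℝ)+1)^3))) := by
  apply aux_g_summable.mul_of_nonneg aux_g_summable
  · intro n; positivity
  · intro n; positivity

lemma aux_bound (a b : ℕ) (c d : ℂ) (hc : ‖c‖ ≤ 1)
    (hd : ((a:ℝ)+1)^3*((b:ℝ)+1)^3 ≤ ‖d‖ ^ 2) :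
    ‖c / d‖ ≤ 1/Real.sqrt (((a:ℝ)+1)^3) * (1/Real.sqrt (((b:ℝ)+1)^3)) := by
  have h1 : Real.sqrt (((a:ℝ)+1)^3) * Real.sqrt (((b:ℝ)+1)^3) ≤ ‖d‖ := by
    rw [← Real.sqrt_mul (by positivity)]
    calc Real.sqrt (((a:ℝ)+1)^3*((b:ℝ)+1)^3) ≤ Real.sqrt (‖d‖ ^ 2) :=
          Real.sqrt_le_sqrt hd
      _ = ‖d‖ := Real.sqrt_sq (by positivity)
  have hst : 0 < Real.sqrt (((a:ℝ)+1)^3) * Real.sqrt (((b:ℝ)+1)^3) := by positivity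
  rw [norm_div]
  calc ‖c‖ / ‖d‖
      ≤ 1 / (Real.sqrt (((a:ℝ)+1)^3) * Real.sqrt (((b:ℝ)+1)^3)) :=
        div_le_div₀ zero_le_one hc hst h1
    _ = 1/Real.sqrt (((a:ℝ)+1)^3) * (1/Real.sqrt (((b:ℝ)+1)^3)) := by ring

lemma aux_summable_of {f : ℕ×ℕ → ℂ}
    (h : ∀ p : ℕ×ℕ, ‖f p‖
      ≤ 1/Real.sqrt (((p.1:ℝ)+1)^3) * (1/Real.sqrt (((p.2:ℝ)+1)^3))) : Summable f :=
  Summable.of_norm_bounded aux_dom (fun p => by exact h p)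

/-! ### Cast and nonvanishing lemmas -/

lemma abs_cast1 (a : ℕ) : ‖(a:ℂ)+1‖ = (a:ℝ)+1 := by
  rw [show ((a:ℂ)+1) = ((a+1:ℕ):ℂ) by push_cast; ring, Complex.norm_natCast]
  push_cast; ring

lemma abs_cast2 (a b : ℕ) : ‖(a:ℂ)+1+((b:ℂ)+1)‖ = (a:ℝ)+(b:ℝ)+2 := by
  rw [show ((a:ℂ)+1+((b:ℂ)+1)) = ((a+b+2:ℕ):ℂ) by push_cast; ring, Complex.norm_natCast]
  push_cast; ring

lemma ne_zero1 (a : ℕ) : ((a:ℂ)+1) ≠ 0 := by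
  intro h
  have := congrArg (‖·‖) h
  rw [abs_cast1, norm_zero] at this
  nlinarith [Nat.cast_nonneg (α := ℝ) a]

lemma ne_zero2 (a b : ℕ) : ((a:ℂ)+1+((b:ℂ)+1)) ≠ 0 := by
  intro h
  have := congrArg (‖·‖) h
  rw [abs_cast2, norm_zero] at this
  nlinarith [Nat.cast_nonneg (α := ℝ) a, Nat.cast_nonneg (α := ℝ) b]

/-! ### The telescoping/harmonic sum -/

lemma telescope (φ : ℕ → ℂ) (h0 : Tendsto φ atTop (nhds 0))
    (hs : Summable (fun a => φ a - φ (a+1))) :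
    HasSum (fun a => φ a - φ (a+1)) (φ 0) := by
  have h1 := hs.hasSum
  have h2 := h1.tendsto_sum_nat
  have h3 : Tendsto (fun n => ∑ i ∈ Finset.range n, (φ i - φ (i+1))) atTop (nhds (φ 0)) := by
    simp_rw [Finset.sum_range_sub' φ]
    simpa using tendsto_const_nhds.sub h0
  rwa [tendsto_nhds_unique h2 h3] at h1

lemma tend0 (i : ℕ) : Tendsto (fun a : ℕ => 1/((a:ℂ)+(i:ℂ)+1)) atTop (nhds 0) := by
  rw [tendsto_zero_iff_norm_tendsto_zero]
  have hb : Tendsto (fun a : ℕ => 1/((a:ℝ)+1)) atTop (nhds 0) :=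
    tendsto_one_div_add_atTop_nhds_zero_nat
  apply squeeze_zero (fun a => norm_nonneg _) _ hb
  intro a
  rw [norm_div, norm_one,
    show ((a:ℂ)+(i:ℂ)+1) = ((a+i+1:ℕ):ℂ) by push_cast; ring, Complex.norm_natCast]
  apply div_le_div_of_nonneg_left one_pos.le (by positivity)
  push_cast; linarith [Nat.cast_nonneg (α := ℝ) i]

lemma nz_nat (a i c : ℕ) (hc : 0 < c) : ((a:ℂ)+(i:ℂ)+(c:ℂ)) ≠ 0 := by
  rw [show ((a:ℂ)+(i:ℂ)+(c:ℂ)) = ((a+i+c:ℕ):ℂ) by push_cast; ring]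
  exact Nat.cast_ne_zero.mpr (by omega)

lemma diff_summable (i : ℕ) :
    Summable (fun a : ℕ => 1/((a:ℂ)+(i:ℂ)+1) - 1/((a:ℂ)+(i:ℂ)+2)) := by
  apply Summable.of_norm_bounded aux_sq_summable
  intro a
  have h1 : ((a:ℂ)+(i:ℂ)+1) ≠ 0 := by exact_mod_cast nz_nat a i 1 one_pos
  have h2 : ((a:ℂ)+(i:ℂ)+2) ≠ 0 := by exact_mod_cast nz_nat a i 2 two_pos
  have heq : 1/((a:ℂ)+(i:ℂ)+1) - 1/((a:ℂ)+(i:ℂ)+2)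
      = 1/(((a:ℂ)+(i:ℂ)+1)*((a:ℂ)+(i:ℂ)+2)) := by
    field_simp
    ring
  rw [heq, norm_div, norm_one, norm_mul,
    show ((a:ℂ)+(i:ℂ)+1) = ((a+i+1:ℕ):ℂ) by push_cast; ring,
    show ((a:ℂ)+(i:ℂ)+2) = ((a+i+2:ℕ):ℂ) by push_cast; ring,
    Complex.norm_natCast, Complex.norm_natCast, one_div, one_div]
  apply inv_anti₀ (by positivity)
  push_cast
  nlinarith [Nat.cast_nonneg (α := ℝ) a, Nat.cast_nonneg (α := ℝ) i]

lemma harmonic_hasSum (b : ℕ) :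
    HasSum (fun a : ℕ => 1/((a:ℂ)+1) - 1/((a:ℂ)+1+((b:ℂ)+1)))
      (∑ j ∈ Finset.range (b+1), 1/((j:ℂ)+1)) := by
  have key : ∀ i : ℕ, HasSum (fun a : ℕ => 1/((a:ℂ)+(i:ℂ)+1) - 1/((a:ℂ)+(i:ℂ)+2))
      (1/((i:ℂ)+1)) := by
    intro i
    have ht := telescope (fun a : ℕ => 1/((a:ℂ)+(i:ℂ)+1)) (tend0 i)
      ((diff_summable i).congr (fun a => by push_cast; ring))
    rw [show (fun a : ℕ => (fun a : ℕ => 1/((a:ℂ)+(i:ℂ)+1)) a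
          - (fun a : ℕ => 1/((a:ℂ)+(i:ℂ)+1)) (a+1))
        = (fun a : ℕ => 1/((a:ℂ)+(i:ℂ)+1) - 1/((a:ℂ)+(i:ℂ)+2)) from
      funext fun a => by push_cast; ring] at ht
    simpa using ht
  have hsum := hasSum_sum (s := Finset.range (b+1)) (fun i _ => key i)
  rw [show (fun a : ℕ => ∑ i ∈ Finset.range (b+1), (1/((a:ℂ)+(i:ℂ)+1) - 1/((a:ℂ)+(i:ℂ)+2)))
      = (fun a : ℕ => 1/((a:ℂ)+1) - 1/((a:ℂ)+1+((b:ℂ)+1))) from funext fun a => ?_] at hsum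
  · exact hsum
  · calc ∑ i ∈ Finset.range (b+1), (1/((a:ℂ)+(i:ℂ)+1) - 1/((a:ℂ)+(i:ℂ)+2))
        = ∑ i ∈ Finset.range (b+1),
            ((fun j : ℕ => 1/((a:ℂ)+(j:ℂ)+1)) i - (fun j : ℕ => 1/((a:ℂ)+(j:ℂ)+1)) (i+1)) :=
          Finset.sum_congr rfl (fun i _ => by push_cast; ring)
      _ = (fun j : ℕ => 1/((a:ℂ)+(j:ℂ)+1)) 0 - (fun j : ℕ => 1/((a:ℂ)+(j:ℂ)+1)) (b+1) :=
          Finset.sum_range_sub' _ (b+1)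
      _ = 1/((a:ℂ)+1) - 1/((a:ℂ)+1+((b:ℂ)+1)) := by push_cast; ring_nf

/-! ### The partial-fraction identity -/

lemma partial_frac (k : ℕ) (m n : ℂ) (hm : m ≠ 0) (hn : n ≠ 0) (hmn : m + n ≠ 0) :
    1/(m*(m+n)^(k+1)) + ∑ ν ∈ Finset.Icc 2 (k+1), 1/(n^(k+2-ν)*(m+n)^ν)
      = 1/n^(k+1) * (1/m - 1/(m+n)) := by
  induction k with
  | zero =>
    rw [show Finset.Icc 2 1 = (∅ : Finset ℕ) by decide]
    simp only [Finset.sum_empty, add_zero, zero_add, pow_one]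
    field_simp
    ring
  | succ k ih =>
    have hstep : ∑ ν ∈ Finset.Icc 2 (k+1+1), 1/(n^(k+1+2-ν)*(m+n)^ν)
        = (1/n) * ∑ ν ∈ Finset.Icc 2 (k+1), 1/(n^(k+2-ν)*(m+n)^ν) + 1/(n*(m+n)^(k+2)) := by
      rw [Finset.sum_Icc_succ_top (by omega), Finset.mul_sum]
      congr 1
      · apply Finset.sum_congr rfl
        intro ν hν
        have hν' : ν ≤ k+1 := (Finset.mem_Icc.mp hν).2
        rw [show k+1+2-ν = (k+2-ν)+1 by omega, pow_succ]
        have h1 : n^(k+2-ν) ≠ 0 := pow_ne_zero _ hn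
        have h2 : (m+n)^ν ≠ 0 := pow_ne_zero _ hmn
        generalize n^(k+2-ν) = P at h1 ⊢
        generalize (m+n)^ν = Q at h2 ⊢
        field_simp
      · rw [show k+1+2-(k+1+1) = 1 by omega, pow_one, show k+1+1 = k+2 by ring]
    rw [hstep]
    have hm2 : 1/(m*(m+n)^(k+1+1)) = (1/n) * (1/(m*(m+n)^(k+1))) - 1/(n*(m+n)^(k+2)) := by
      have hP : (m+n)^(k+1) ≠ 0 := pow_ne_zero _ hmn
      rw [show (k+2) = (k+1)+1 by ring, pow_succ]
      generalize (m+n)^(k+1) = P at hP ⊢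
      field_simp
      ring
    rw [hm2,
      show (1/n) * (1/(m*(m+n)^(k+1))) - 1/(n*(m+n)^(k+2)) +
        ((1/n) * ∑ ν ∈ Finset.Icc 2 (k+1), 1/(n^(k+2-ν)*(m+n)^ν) + 1/(n*(m+n)^(k+2)))
        = (1/n) * (1/(m*(m+n)^(k+1)) + ∑ ν ∈ Finset.Icc 2 (k+1), 1/(n^(k+2-ν)*(m+n)^ν)) by ring,
      ih, pow_succ]
    have hN : n^(k+1) ≠ 0 := pow_ne_zero _ hn
    generalize n^(k+1) = P at hN ⊢
    field_simp
    ring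

/-! ### Real elementary inequalities -/

lemma sq_mono {x y : ℝ} (hx : 0 ≤ x) (h : x ≤ y) : x^2 ≤ y^2 := pow_le_pow_left₀ hx h 2

lemma ineq1 (k a b : ℕ) (hk : 1 ≤ k) :
    ((a:ℝ)+1)^3*((b:ℝ)+1)^3 ≤ (((a:ℝ)+1)*(((a:ℝ)+(b:ℝ)+2))^(k+1))^2 := by
  have ha : (0:ℝ) ≤ a := Nat.cast_nonneg a
  have hb : (0:ℝ) ≤ b := Nat.cast_nonneg b
  have h2 : ((a:ℝ)+(b:ℝ)+2)^2 ≤ ((a:ℝ)+(b:ℝ)+2)^(k+1) :=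
    pow_le_pow_right₀ (by linarith) (by omega)
  have h4 : ((a:ℝ)+1)*((b:ℝ)+1)^3 ≤ ((a:ℝ)+(b:ℝ)+2)^4 := by
    calc ((a:ℝ)+1)*((b:ℝ)+1)^3 ≤ ((a:ℝ)+(b:ℝ)+2)*((a:ℝ)+(b:ℝ)+2)^3 := by
          apply mul_le_mul (by linarith) (pow_le_pow_left₀ (by linarith) (by linarith) 3)
            (by positivity) (by linarith)
      _ = ((a:ℝ)+(b:ℝ)+2)^4 := by ring
  calc ((a:ℝ)+1)^3*((b:ℝ)+1)^3 = (((a:ℝ)+1)*((b:ℝ)+1)^3) * ((a:ℝ)+1)^2 := by ring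
    _ ≤ ((a:ℝ)+(b:ℝ)+2)^4 * ((a:ℝ)+1)^2 := by
        apply mul_le_mul_of_nonneg_right h4 (by positivity)
    _ = (((a:ℝ)+1)*((a:ℝ)+(b:ℝ)+2)^2)^2 := by ring
    _ ≤ (((a:ℝ)+1)*(((a:ℝ)+(b:ℝ)+2))^(k+1))^2 := by
        apply sq_mono (by positivity) (mul_le_mul_of_nonneg_left h2 (by linarith))

lemma ineq3 (k ν a b : ℕ) (h2ν : 2 ≤ ν) (hνk : ν ≤ k+1) :
    ((a:ℝ)+1)^3*((b:ℝ)+1)^3 ≤ ((((b:ℝ)+1))^(k+2-ν)*(((a:ℝ)+(b:ℝ)+2))^ν)^2 := by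
  have ha : (0:ℝ) ≤ a := Nat.cast_nonneg a
  have hb : (0:ℝ) ≤ b := Nat.cast_nonneg b
  have hb1 : ((b:ℝ)+1)^1 ≤ ((b:ℝ)+1)^(k+2-ν) := pow_le_pow_right₀ (by linarith) (by omega)
  have hu2 : ((a:ℝ)+(b:ℝ)+2)^2 ≤ ((a:ℝ)+(b:ℝ)+2)^ν := pow_le_pow_right₀ (by linarith) h2ν
  have h4 : ((a:ℝ)+1)^3*((b:ℝ)+1) ≤ ((a:ℝ)+(b:ℝ)+2)^4 := by
    calc ((a:ℝ)+1)^3*((b:ℝ)+1) ≤ ((a:ℝ)+(b:ℝ)+2)^3*((a:ℝ)+(b:ℝ)+2) := by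
          apply mul_le_mul (pow_le_pow_left₀ (by linarith) (by linarith) 3) (by linarith)
            (by positivity) (by positivity)
      _ = ((a:ℝ)+(b:ℝ)+2)^4 := by ring
  calc ((a:ℝ)+1)^3*((b:ℝ)+1)^3 = (((a:ℝ)+1)^3*((b:ℝ)+1)) * ((b:ℝ)+1)^2 := by ring
    _ ≤ ((a:ℝ)+(b:ℝ)+2)^4 * ((b:ℝ)+1)^2 := mul_le_mul_of_nonneg_right h4 (by positivity)
    _ = (((b:ℝ)+1)*((a:ℝ)+(b:ℝ)+2)^2)^2 := by ring
    _ ≤ ((((b:ℝ)+1))^(k+2-ν)*(((a:ℝ)+(b:ℝ)+2))^ν)^2 := by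
        apply sq_mono (by positivity)
        calc ((b:ℝ)+1)*((a:ℝ)+(b:ℝ)+2)^2 ≤ ((b:ℝ)+1)^(k+2-ν)*((a:ℝ)+(b:ℝ)+2)^ν := by
              apply mul_le_mul (by simpa using hb1) hu2 (by positivity) (by positivity)

lemma ineqA (k a b : ℕ) (hk : 1 ≤ k) :
    ((a:ℝ)+1)^3*((b:ℝ)+1)^3 ≤ (((a:ℝ)+1)*((b:ℝ)+1)^k*((a:ℝ)+(b:ℝ)+2))^2 := by
  have ha : (0:ℝ) ≤ a := Nat.cast_nonneg a
  have hb : (0:ℝ) ≤ b := Nat.cast_nonneg b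
  have hb1 : ((b:ℝ)+1) ≤ ((b:ℝ)+1)^k := by
    simpa using pow_le_pow_right₀ (a := (b:ℝ)+1) (by linarith) hk
  have key : ((a:ℝ)+1)*((b:ℝ)+1) ≤ ((a:ℝ)+(b:ℝ)+2)^2 := by nlinarith
  calc ((a:ℝ)+1)^3*((b:ℝ)+1)^3
      = ((a:ℝ)+1)^2*((b:ℝ)+1)^2*(((a:ℝ)+1)*((b:ℝ)+1)) := by ring
    _ ≤ ((a:ℝ)+1)^2*((b:ℝ)+1)^2*((a:ℝ)+(b:ℝ)+2)^2 :=
        mul_le_mul_of_nonneg_left key (by positivity)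
    _ = (((a:ℝ)+1)*((b:ℝ)+1)*((a:ℝ)+(b:ℝ)+2))^2 := by ring
    _ ≤ (((a:ℝ)+1)*((b:ℝ)+1)^k*((a:ℝ)+(b:ℝ)+2))^2 := by
        apply sq_mono (by positivity)
        apply mul_le_mul_of_nonneg_right
          (mul_le_mul_of_nonneg_left hb1 (by linarith)) (by linarith)

lemma ineqF (k a c : ℕ) (hk : 1 ≤ k) (hac : a < c) :
    ((a:ℝ)+1)^3*((c:ℝ)+1)^3 ≤ (((a:ℝ)+1)*((c:ℝ)+1)^(k+1))^2 := by
  have ha : (0:ℝ) ≤ a := Nat.cast_nonneg a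
  have hc : (0:ℝ) ≤ c := Nat.cast_nonneg c
  have hac' : ((a:ℝ)+1) ≤ ((c:ℝ)+1) := by
    have : (a:ℝ) ≤ (c:ℝ) := Nat.cast_le.mpr hac.le
    linarith
  have h2 : ((c:ℝ)+1)^2 ≤ ((c:ℝ)+1)^(k+1) := pow_le_pow_right₀ (by linarith) (by omega)
  calc ((a:ℝ)+1)^3*((c:ℝ)+1)^3 = (((a:ℝ)+1)*((c:ℝ)+1)) * (((a:ℝ)+1)*((c:ℝ)+1))^2 := by ring
    _ ≤ (((c:ℝ)+1)*((c:ℝ)+1)) * (((a:ℝ)+1)*((c:ℝ)+1))^2 := by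
        apply mul_le_mul_of_nonneg_right
          (mul_le_mul_of_nonneg_right hac' (by linarith)) (by positivity)
    _ = (((a:ℝ)+1)*((c:ℝ)+1)^2)^2 := by ring
    _ ≤ (((a:ℝ)+1)*((c:ℝ)+1)^(k+1))^2 :=
        sq_mono (by positivity) (mul_le_mul_of_nonneg_left h2 (by linarith))

set_option maxHeartbeats 1000000 in
theorem sum_formula_double_polylog (k : ℕ) (hk : 1 ≤ k) (x : ℂ) (hx : ‖x‖ ≤ 1) :
    (∑' p : ℕ × ℕ, x ^ (p.2 + 1) /
        (((p.1 : ℂ) + 1) * ((p.1 : ℂ) + 1 + ((p.2 : ℂ) + 1)) ^ (k + 1)))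
      - (∑' p : ℕ × ℕ, x ^ (p.1 + 1 + (p.2 + 1)) /
        (((p.1 : ℂ) + 1) * ((p.1 : ℂ) + 1 + ((p.2 : ℂ) + 1)) ^ (k + 1)))
      + ∑ ν ∈ Finset.Icc 2 (k + 1), ∑' p : ℕ × ℕ, x ^ (p.2 + 1) /
          (((p.2 : ℂ) + 1) ^ (k + 2 - ν) * ((p.1 : ℂ) + 1 + ((p.2 : ℂ) + 1)) ^ ν)
      = ∑' n : ℕ, x ^ (n + 1) / ((n : ℂ) + 1) ^ (k + 2) := by
  have hx1 : ∀ e : ℕ, ‖x ^ e‖ ≤ 1 := fun e => by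
    rw [norm_pow]; exact pow_le_one₀ (norm_nonneg _) hx
  -- the key auxiliary functions
  set fA : ℕ×ℕ → ℂ := fun p => x^(p.2+1)/((p.2:ℂ)+1)^(k+1)
    * (1/((p.1:ℂ)+1) - 1/((p.1:ℂ)+1+((p.2:ℂ)+1))) with hfA_def
  set F : ℕ×ℕ → ℂ := fun q => if q.1 < q.2
    then x^(q.2+1) / (((q.1:ℂ)+1) * ((q.2:ℂ)+1)^(k+1)) else 0 with hF_def
  -- summability of all the pieces
  have hs1 : Summable (fun p : ℕ×ℕ => x ^ (p.2+1) /
      (((p.1:ℂ)+1) * ((p.1:ℂ)+1+((p.2:ℂ)+1))^(k+1))) := by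
    apply aux_summable_of; rintro ⟨a,b⟩
    apply aux_bound a b _ _ (hx1 _)
    rw [norm_mul, norm_pow, abs_cast1, abs_cast2]
    exact ineq1 k a b hk
  have hs2 : Summable (fun p : ℕ×ℕ => x ^ (p.1+1+(p.2+1)) /
      (((p.1:ℂ)+1) * ((p.1:ℂ)+1+((p.2:ℂ)+1))^(k+1))) := by
    apply aux_summable_of; rintro ⟨a,b⟩
    apply aux_bound a b _ _ (hx1 _)
    rw [norm_mul, norm_pow, abs_cast1, abs_cast2]
    exact ineq1 k a b hk
  have hs3 : ∀ ν ∈ Finset.Icc 2 (k+1), Summable (fun p : ℕ×ℕ => x ^ (p.2+1) /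
      (((p.2:ℂ)+1)^(k+2-ν) * ((p.1:ℂ)+1+((p.2:ℂ)+1))^ν)) := by
    intro ν hν
    obtain ⟨h2ν, hνk⟩ := Finset.mem_Icc.mp hν
    apply aux_summable_of; rintro ⟨a,b⟩
    apply aux_bound a b _ _ (hx1 _)
    rw [norm_mul, norm_pow, norm_pow, abs_cast1, abs_cast2]
    exact ineq3 k ν a b h2ν hνk
  have hfA_eq : ∀ p : ℕ×ℕ, fA p
      = x^(p.2+1) / (((p.1:ℂ)+1) * ((p.2:ℂ)+1)^k * ((p.1:ℂ)+1+((p.2:ℂ)+1))) := by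
    intro p
    simp only [hfA_def]
    have h1 := ne_zero1 p.1
    have h2 := ne_zero1 p.2
    have h3 := ne_zero2 p.1 p.2
    have h4 : ((p.2:ℂ)+1)^k ≠ 0 := pow_ne_zero _ h2
    rw [pow_succ ((p.2:ℂ)+1) k]
    generalize ((p.2:ℂ)+1)^k = P at h4 ⊢
    field_simp
    ring
  have hsA : Summable fA := by
    apply Summable.congr _ (fun p => (hfA_eq p).symm)
    apply aux_summable_of; rintro ⟨a,b⟩
    apply aux_bound a b _ _ (hx1 _)
    rw [norm_mul, norm_mul, norm_pow, abs_cast1, abs_cast1, abs_cast2]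
    exact ineqA k a b hk
  have hsF : Summable F := by
    apply aux_summable_of; rintro ⟨a,c⟩
    by_cases hac : a < c
    · have : F (a,c) = x^(c+1) / (((a:ℂ)+1) * ((c:ℂ)+1)^(k+1)) := by
        simp only [hF_def]; rw [if_pos hac]
      rw [this]
      apply aux_bound a c _ _ (hx1 _)
      rw [norm_mul, norm_pow, abs_cast1, abs_cast1]
      exact ineqF k a c hk hac
    · have : F (a,c) = 0 := by simp only [hF_def]; rw [if_neg hac]
      rw [this, norm_zero]
      positivity
  have hsli : Summable (fun n : ℕ => x^(n+1)/((n:ℂ)+1)^(k+2)) := by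
    apply Summable.of_norm_bounded aux_sq_summable
    intro n
    rw [norm_div, norm_pow, norm_pow, abs_cast1]
    have h2 : ((n:ℝ)+1)^2 ≤ ((n:ℝ)+1)^(k+2) :=
      pow_le_pow_right₀ (by have := Nat.cast_nonneg (α := ℝ) n; linarith) (by omega)
    exact div_le_div₀ zero_le_one (pow_le_one₀ (norm_nonneg _) hx)
      (by positivity) h2
  -- Step A : S1 + S3 = ∑' fA
  have hsum3 : Summable (fun p : ℕ×ℕ => ∑ ν ∈ Finset.Icc 2 (k+1), x ^ (p.2+1) /
      (((p.2:ℂ)+1)^(k+2-ν) * ((p.1:ℂ)+1+((p.2:ℂ)+1))^ν)) :=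
    summable_sum hs3
  have eA : (∑' p : ℕ × ℕ, x ^ (p.2 + 1) /
        (((p.1 : ℂ) + 1) * ((p.1 : ℂ) + 1 + ((p.2 : ℂ) + 1)) ^ (k + 1)))
      + (∑ ν ∈ Finset.Icc 2 (k + 1), ∑' p : ℕ × ℕ, x ^ (p.2 + 1) /
          (((p.2 : ℂ) + 1) ^ (k + 2 - ν) * ((p.1 : ℂ) + 1 + ((p.2 : ℂ) + 1)) ^ ν))
      = ∑' p : ℕ×ℕ, fA p := by
    rw [← Summable.tsum_finsetSum hs3, ← Summable.tsum_add hs1 hsum3]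
    apply tsum_congr
    intro p
    have hpf := partial_frac k ((p.1:ℂ)+1) ((p.2:ℂ)+1) (ne_zero1 p.1) (ne_zero1 p.2)
      (ne_zero2 p.1 p.2)
    calc x ^ (p.2+1) / (((p.1:ℂ)+1) * ((p.1:ℂ)+1+((p.2:ℂ)+1))^(k+1))
          + ∑ ν ∈ Finset.Icc 2 (k+1), x ^ (p.2+1) /
            (((p.2:ℂ)+1)^(k+2-ν) * ((p.1:ℂ)+1+((p.2:ℂ)+1))^ν)
        = x ^ (p.2+1) * (1/(((p.1:ℂ)+1) * (((p.1:ℂ)+1)+((p.2:ℂ)+1))^(k+1))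
            + ∑ ν ∈ Finset.Icc 2 (k+1),
              1/(((p.2:ℂ)+1)^(k+2-ν) * (((p.1:ℂ)+1)+((p.2:ℂ)+1))^ν)) := by
          rw [mul_add, Finset.mul_sum]
          congr 1
          · rw [mul_one_div]
          · exact Finset.sum_congr rfl (fun ν _ => by rw [mul_one_div])
      _ = x ^ (p.2+1) * (1/((p.2:ℂ)+1)^(k+1) * (1/((p.1:ℂ)+1) - 1/(((p.1:ℂ)+1)+((p.2:ℂ)+1)))) := by
          rw [hpf]
      _ = fA p := by
          simp only [hfA_def]
          rw [div_eq_mul_one_div (x^(p.2+1)), mul_assoc]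
  -- Step C : S2 = ∑' F
  have eC : (∑' p : ℕ × ℕ, x ^ (p.1 + 1 + (p.2 + 1)) /
        (((p.1 : ℂ) + 1) * ((p.1 : ℂ) + 1 + ((p.2 : ℂ) + 1)) ^ (k + 1)))
      = ∑' q : ℕ×ℕ, F q := by
    have hinj : Function.Injective (fun q : ℕ×ℕ => (q.1, q.1+q.2+1)) := by
      rintro ⟨a,b⟩ ⟨c,d⟩ h
      simp only [Prod.mk.injEq] at h
      obtain ⟨h1, h2⟩ := h
      subst h1
      have : b = d := by omega
      rw [this]
    have hsupp : Function.support F ⊆ Set.range (fun q : ℕ×ℕ => (q.1, q.1+q.2+1)) := by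
      rintro ⟨a,c⟩ h
      simp only [Function.mem_support, hF_def] at h
      by_cases hac : a < c
      · refine ⟨(a, c-a-1), ?_⟩
        show (a, a+(c-a-1)+1) = (a, c)
        rw [show a+(c-a-1)+1 = c from by omega]
      · rw [if_neg hac] at h
        exact absurd rfl h
    rw [← hinj.tsum_eq hsupp]
    apply tsum_congr
    intro p
    have : F (p.1, p.1+p.2+1)
        = x^(p.1+p.2+1+1) / (((p.1:ℂ)+1) * (((p.1+p.2+1:ℕ):ℂ)+1)^(k+1)) := by
      simp only [hF_def]
      rw [if_pos (show p.1 < p.1+p.2+1 by omega)]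
    rw [this, show ((p.1+p.2+1:ℕ):ℂ)+1 = (p.1:ℂ)+1+((p.2:ℂ)+1) by push_cast; ring,
      show p.1+p.2+1+1 = p.1+1+(p.2+1) by omega]
  -- Step B : ∑' fA = Li + ∑' F
  have eB : (∑' p : ℕ×ℕ, fA p)
      = (∑' n : ℕ, x ^ (n + 1) / ((n : ℂ) + 1) ^ (k + 2)) + ∑' q : ℕ×ℕ, F q := by
    have hA' : HasSum (fun q : ℕ×ℕ => fA (q.2, q.1)) (∑' p : ℕ×ℕ, fA p) :=
      ((Equiv.prodComm ℕ ℕ).hasSum_iff).2 hsA.hasSum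
    have hfibA : ∀ b : ℕ, HasSum (fun a : ℕ => fA (a, b))
        ((x^(b+1)/((b:ℂ)+1)^(k+1)) * ∑ j ∈ Finset.range (b+1), 1/((j:ℂ)+1)) := by
      intro b
      have h := (harmonic_hasSum b).mul_left (x^(b+1)/((b:ℂ)+1)^(k+1))
      have hfe : (fun a : ℕ => x^(b+1)/((b:ℂ)+1)^(k+1)
            * (1/((a:ℂ)+1) - 1/((a:ℂ)+1+((b:ℂ)+1))))
          = (fun a : ℕ => fA (a,b)) := funext fun a => by simp only [hfA_def]
      rwa [hfe] at h
    have hHA : HasSum (fun b : ℕ =>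
        (x^(b+1)/((b:ℂ)+1)^(k+1)) * ∑ j ∈ Finset.range (b+1), 1/((j:ℂ)+1))
        (∑' p : ℕ×ℕ, fA p) := hA'.prod_fiberwise hfibA
    have hF' : HasSum (fun q : ℕ×ℕ => F (q.2, q.1)) (∑' q : ℕ×ℕ, F q) :=
      ((Equiv.prodComm ℕ ℕ).hasSum_iff).2 hsF.hasSum
    have hfibF : ∀ c : ℕ, HasSum (fun a : ℕ => F (a, c))
        ((x^(c+1)/((c:ℂ)+1)^(k+1)) * ∑ j ∈ Finset.range c, 1/((j:ℂ)+1)) := by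
      intro c
      have h0 : ∀ a ∉ Finset.range c, F (a, c) = 0 := by
        intro a ha
        simp only [hF_def]
        rw [if_neg (by simp at ha; omega)]
      have hfin : HasSum (fun a : ℕ => F (a, c)) (∑ a ∈ Finset.range c, F (a, c)) :=
        hasSum_sum_of_ne_finset_zero h0
      have heq : ∑ a ∈ Finset.range c, F (a, c)
          = (x^(c+1)/((c:ℂ)+1)^(k+1)) * ∑ j ∈ Finset.range c, 1/((j:ℂ)+1) := by
        rw [Finset.mul_sum]
        apply Finset.sum_congr rfl
        intro a ha
        simp only [hF_def]
        rw [if_pos (Finset.mem_range.mp ha), mul_one_div, div_div]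
        congr 1
        ring
      rwa [heq] at hfin
    have hHF : HasSum (fun c : ℕ =>
        (x^(c+1)/((c:ℂ)+1)^(k+1)) * ∑ j ∈ Finset.range c, 1/((j:ℂ)+1))
        (∑' q : ℕ×ℕ, F q) := hF'.prod_fiberwise hfibF
    have hcomb := hsli.hasSum.add hHF
    have hptw : (fun c : ℕ => x^(c+1)/((c:ℂ)+1)^(k+2)
          + (x^(c+1)/((c:ℂ)+1)^(k+1)) * ∑ j ∈ Finset.range c, 1/((j:ℂ)+1))
        = (fun c : ℕ =>
          (x^(c+1)/((c:ℂ)+1)^(k+1)) * ∑ j ∈ Finset.range (c+1), 1/((j:ℂ)+1)) := by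
      funext c
      rw [Finset.sum_range_succ, mul_add, add_comm (x^(c+1)/((c:ℂ)+1)^(k+2))]
      congr 1
      rw [show k+2 = (k+1)+1 by ring, pow_succ ((c:ℂ)+1) (k+1), mul_one_div, div_div]
    rw [hptw] at hcomb
    exact (hHA.unique hcomb)
  linear_combination eA + eB - eC
end
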